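/- Let Λ = ℤ_p[[X]] (or more generally a Noetherian local integral domain), and let a₁, a₂ ∈ Λ with a₁ | a₂. Suppose for every n ≥ 0, setting Λ_n := Λ/((1+X)^{p^n} - 1), the cardinalities #(Λ/a₁Λ ⊗_Λ Λ_n) and #(Λ/a₂Λ ⊗_Λ Λ_n) are finite and their ratio is bounded above and below independently of n. Then a₁Λ = a₂Λ. -/

import Mathlib

open PowerSeries Filter

namespace Stmt8Aux

variable {p : ℕ} [Fact p.Prime]

/-- The auxiliary "coefficientwise" ideal `V n`: all power series whose `k`-th coefficient is
divisible by `p ^ (n - k)`. -/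
private def V (p : ℕ) [Fact p.Prime] (n : ℕ) : Ideal (PowerSeries ℤ_[p]) where
  carrier := {f | ∀ k, (p : ℤ_[p]) ^ (n - k) ∣ PowerSeries.coeff k f}
  add_mem' := by
    intro a b ha hb k
    simpa using dvd_add (ha k) (hb k)
  zero_mem' := by intro k; simp
  smul_mem' := by
    intro c x hx k
    rw [smul_eq_mul, PowerSeries.coeff_mul]
    apply Finset.dvd_sum
    rintro ⟨i, j⟩ hij
    have hij' : i + j = k := Finset.HasAntidiagonal.mem_antidiagonal.mp hij
    exact Dvd.dvd.mul_left (dvd_trans (pow_dvd_pow _ (by omega)) (hx j)) _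

private lemma mem_V {n : ℕ} {f : PowerSeries ℤ_[p]} :
    f ∈ V p n ↔ ∀ k, (p : ℤ_[p]) ^ (n - k) ∣ PowerSeries.coeff k f := Iff.rfl

private lemma maxIdeal_le_V1 :
    IsLocalRing.maximalIdeal (PowerSeries ℤ_[p]) ≤ V p 1 := by
  intro f hf
  rw [mem_V]
  intro k
  match k with
  | 0 =>
    have hnu : ¬ IsUnit f := hf
    have : ¬ IsUnit (PowerSeries.constantCoeff f) := by
      intro h
      exact hnu (PowerSeries.isUnit_iff_constantCoeff.mpr h)
    have : PowerSeries.constantCoeff f ∈ IsLocalRing.maximalIdeal ℤ_[p] := this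
    rw [PadicInt.maximalIdeal_eq_span_p, Ideal.mem_span_singleton] at this
    simpa using this
  | (k+1) => simp

private lemma maxpow_le_V (n : ℕ) :
    (IsLocalRing.maximalIdeal (PowerSeries ℤ_[p])) ^ n ≤ V p n := by
  induction n with
  | zero => intro f _; rw [mem_V]; intro k; simp
  | succ n ih =>
    rw [pow_succ]
    apply Ideal.mul_le.mpr
    intro f hf g hg
    have hf' := ih hf
    have hg' := maxIdeal_le_V1 hg
    rw [mem_V]
    intro k
    rw [PowerSeries.coeff_mul]
    apply Finset.dvd_sum
    rintro ⟨i, j⟩ hij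
    have hij' : i + j = k := Finset.HasAntidiagonal.mem_antidiagonal.mp hij
    have h1 : (p : ℤ_[p]) ^ (n - i) ∣ PowerSeries.coeff i f := hf' i
    have h2 : (p : ℤ_[p]) ^ (1 - j) ∣ PowerSeries.coeff j g := hg' j
    calc (p : ℤ_[p]) ^ (n + 1 - k)
        ∣ (p : ℤ_[p]) ^ ((n - i) + (1 - j)) := pow_dvd_pow _ (by omega)
      _ = (p : ℤ_[p]) ^ (n - i) * (p : ℤ_[p]) ^ (1 - j) := pow_add _ _ _
      _ ∣ _ := mul_dvd_mul h1 h2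

/-- Principal ideals of `ℤ_p[[X]]` are closed in the adic topology: this follows from
compactness of `ℤ_p`. -/
private lemma mem_span_singleton_of_forall_mem_sup (g f : PowerSeries ℤ_[p])
    (h : ∀ n : ℕ, f ∈ Ideal.span {g} ⊔ (IsLocalRing.maximalIdeal (PowerSeries ℤ_[p])) ^ n) :
    f ∈ Ideal.span {g} := by
  have hx : ∀ n : ℕ, ∃ x : PowerSeries ℤ_[p],
      f - x * g ∈ (IsLocalRing.maximalIdeal (PowerSeries ℤ_[p])) ^ n := by
    intro n
    obtain ⟨y, hy, z, hz, hsum⟩ := Submodule.mem_sup.mp (h n)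
    obtain ⟨x, hxy⟩ := Ideal.mem_span_singleton'.mp hy
    exact ⟨x, by rw [hxy, ← hsum]; simpa using hz⟩
  choose x hxmem using hx
  -- the coefficient map of multiplication by `g`
  set F : (ℕ → ℤ_[p]) → (ℕ → ℤ_[p]) :=
    fun c k => PowerSeries.coeff k (PowerSeries.mk c * g) with hF
  have hFcont : Continuous F := by
    apply continuous_pi
    intro k
    simp only [hF, PowerSeries.coeff_mul, PowerSeries.coeff_mk]
    exact continuous_finset_sum _ fun q _ => (continuous_apply q.1).mul continuous_const
  have hclosed : IsClosed (Set.range F) := (isCompact_range hFcont).isClosed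
  have hmk : ∀ h : PowerSeries ℤ_[p], PowerSeries.mk (fun k => PowerSeries.coeff k h) = h :=
    fun h => PowerSeries.ext fun k => by simp
  -- convergence of coefficients
  have htends : Tendsto (fun n => F (fun k => PowerSeries.coeff k (x n))) atTop
      (nhds (fun k => PowerSeries.coeff k f)) := by
    rw [tendsto_pi_nhds]
    intro k
    have hFx : ∀ n, F (fun k => PowerSeries.coeff k (x n)) k
        = PowerSeries.coeff k (x n * g) := by
      intro n; simp only [hF, hmk]
    simp only [hFx]
    rw [tendsto_iff_norm_sub_tendsto_zero]
    have hbound : ∀ n : ℕ,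
        ‖PowerSeries.coeff k (x n * g) - PowerSeries.coeff k f‖
          ≤ ((p : ℝ)⁻¹) ^ (n - k) := by
      intro n
      have hdvd : (p : ℤ_[p]) ^ (n - k) ∣ PowerSeries.coeff k (f - x n * g) :=
        (maxpow_le_V n (hxmem n)) k
      have : PowerSeries.coeff k (f - x n * g)
          ∈ (Ideal.span {(p : ℤ_[p]) ^ (n - k)} : Ideal ℤ_[p]) :=
        Ideal.mem_span_singleton.mpr hdvd
      have hn := (PadicInt.norm_le_pow_iff_mem_span_pow _ (n - k)).mpr this
      rw [map_sub] at hn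
      rw [← norm_neg]
      simp only [neg_sub]
      calc ‖PowerSeries.coeff k f - PowerSeries.coeff k (x n * g)‖
          ≤ (p : ℝ) ^ (-(n - k : ℕ) : ℤ) := hn
        _ = ((p : ℝ)⁻¹) ^ (n - k) := by
            rw [zpow_neg, zpow_natCast, inv_pow]
    apply squeeze_zero (fun n => norm_nonneg _) hbound
    have hp1 : (1 : ℝ) < (p : ℝ) := by
      exact_mod_cast (Fact.out : p.Prime).one_lt
    have hr : ((p : ℝ)⁻¹) < 1 := by
      rw [inv_lt_one_iff₀]; right; exact hp1
    have hr0 : (0 : ℝ) ≤ (p : ℝ)⁻¹ := by positivity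
    simpa [Function.comp_def] using
      (tendsto_pow_atTop_nhds_zero_of_lt_one hr0 hr).comp (tendsto_sub_atTop_nat k)
  have hmem : (fun k => PowerSeries.coeff k f) ∈ Set.range F :=
    hclosed.mem_of_tendsto htends (Eventually.of_forall fun n => ⟨_, rfl⟩)
  obtain ⟨c, hc⟩ := hmem
  rw [Ideal.mem_span_singleton]
  refine ⟨PowerSeries.mk c, ?_⟩
  apply PowerSeries.ext
  intro k
  have := congrFun hc k
  simp only [hF] at this
  rw [mul_comm] at this
  exact (congrArg (fun h => PowerSeries.coeff k h) rfl).trans this.symm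

private lemma isUnit_of_mul_eq_X_pow :
    ∀ (i : ℕ) (b c : PowerSeries ℤ_[p]), b * c = (X : PowerSeries ℤ_[p]) ^ i →
      PowerSeries.constantCoeff b ≠ 0 → IsUnit b := by
  intro i
  induction i with
  | zero =>
    intro b c h _
    exact IsUnit.of_mul_eq_one _ (by simpa using h)
  | succ i ih =>
    intro b c h hb0
    have hc0 : PowerSeries.constantCoeff c = 0 := by
      have hcc := congrArg (PowerSeries.constantCoeff) h
      rw [map_mul, map_pow, PowerSeries.constantCoeff_X, zero_pow (Nat.succ_ne_zero i)] at hcc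
      rcases mul_eq_zero.mp hcc with h' | h'
      · exact absurd h' hb0
      · exact h'
    obtain ⟨c', rfl⟩ := PowerSeries.X_dvd_iff.mpr hc0
    refine ih b c' ?_ hb0
    have hX : (X : PowerSeries ℤ_[p]) * (b * c') = X * X ^ i :=
      calc (X : PowerSeries ℤ_[p]) * (b * c') = b * (X * c') := by ring
        _ = X ^ (i + 1) := h
        _ = X * X ^ i := by ring
    exact mul_left_cancel₀ PowerSeries.X_ne_zero hX

private lemma isUnit_of_finite_quotient (b : PowerSeries ℤ_[p])
    (hb : Finite (PowerSeries ℤ_[p] ⧸ Ideal.span {b})) : IsUnit b := by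
  -- pigeonhole on powers of p: the constant coefficient of b is nonzero
  have hppow : ∃ w : PowerSeries ℤ_[p], b ∣ w ∧ PowerSeries.constantCoeff w ≠ 0 := by
    obtain ⟨i, j, hij, hfij⟩ := Finite.exists_ne_map_eq_of_infinite
      (fun n : ℕ => Ideal.Quotient.mk (Ideal.span {b}) ((p : PowerSeries ℤ_[p]) ^ n))
    wlog hlt : i < j generalizing i j
    · exact this j i hij.symm hfij.symm (by omega)
    have hdvd : b ∣ (p : PowerSeries ℤ_[p]) ^ i - (p : PowerSeries ℤ_[p]) ^ j := by
      rw [← Ideal.mem_span_singleton]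
      exact Ideal.Quotient.eq.mp hfij
    refine ⟨(p : PowerSeries ℤ_[p]) ^ i - (p : PowerSeries ℤ_[p]) ^ j, hdvd, ?_⟩
    have hcc : PowerSeries.constantCoeff ((p : PowerSeries ℤ_[p]) ^ i
        - (p : PowerSeries ℤ_[p]) ^ j) = (p : ℤ_[p]) ^ i - (p : ℤ_[p]) ^ j := by
      simp [map_sub, map_pow]
    rw [hcc]
    intro hzero
    have hpow : ((p : ℤ_[p])) ^ i = ((p : ℤ_[p])) ^ j := by
      have := sub_eq_zero.mp hzero; exact this
    have hnorm : ((p : ℝ)⁻¹) ^ i = ((p : ℝ)⁻¹) ^ j := by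
      have := congrArg (fun z : ℤ_[p] => ‖z‖) hpow
      simpa [norm_pow, PadicInt.norm_p] using this
    have hp1 : (1 : ℝ) < (p : ℝ) := by exact_mod_cast (Fact.out : p.Prime).one_lt
    have h0 : (0 : ℝ) < (p : ℝ)⁻¹ := by positivity
    have h1 : ((p : ℝ)⁻¹) < 1 := by rw [inv_lt_one_iff₀]; right; exact hp1
    have hcontr : ((p : ℝ)⁻¹) ^ j < ((p : ℝ)⁻¹) ^ i :=
      pow_lt_pow_right_of_lt_one₀ h0 h1 hlt
    rw [hnorm] at hcontr
    exact lt_irrefl _ hcontr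
  obtain ⟨w, hbw, hw0⟩ := hppow
  have hb0 : PowerSeries.constantCoeff b ≠ 0 := by
    obtain ⟨e, rfl⟩ := hbw
    intro h
    apply hw0
    rw [map_mul, h, zero_mul]
  -- pigeonhole on powers of X: b divides some X ^ i
  obtain ⟨i, j, hij, hfij⟩ := Finite.exists_ne_map_eq_of_infinite
    (fun n : ℕ => Ideal.Quotient.mk (Ideal.span {b}) ((X : PowerSeries ℤ_[p]) ^ n))
  wlog hlt : i < j generalizing i j
  · exact this j i hij.symm hfij.symm (by omega)
  have hdvd : b ∣ (X : PowerSeries ℤ_[p]) ^ i - X ^ j := by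
    rw [← Ideal.mem_span_singleton]
    exact Ideal.Quotient.eq.mp hfij
  have hfactor : (X : PowerSeries ℤ_[p]) ^ i - X ^ j
      = X ^ i * (1 - X ^ (j - i)) := by
    rw [mul_sub, mul_one, ← pow_add, Nat.add_sub_cancel' (le_of_lt hlt)]
  have hu : IsUnit (1 - (X : PowerSeries ℤ_[p]) ^ (j - i)) := by
    rw [PowerSeries.isUnit_iff_constantCoeff]
    have : PowerSeries.constantCoeff (1 - (X : PowerSeries ℤ_[p]) ^ (j - i)) = 1 := by
      rw [map_sub, map_one, map_pow, PowerSeries.constantCoeff_X,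
        zero_pow (by omega : j - i ≠ 0), sub_zero]
    rw [this]; exact isUnit_one
  have hdvd' : b ∣ (X : PowerSeries ℤ_[p]) ^ i := by
    obtain ⟨u, hu'⟩ := hu
    rw [hfactor, ← hu'] at hdvd
    exact Units.dvd_mul_right.mp hdvd
  obtain ⟨c, hc⟩ := hdvd'
  exact isUnit_of_mul_eq_X_pow i b c hc.symm hb0

private noncomputable def om (p : ℕ) [Fact p.Prime] (n : ℕ) : PowerSeries ℤ_[p] :=
  (1 + PowerSeries.X : PowerSeries ℤ_[p]) ^ p ^ n - 1

private lemma om_dvd {n m : ℕ} (h : n ≤ m) : om p n ∣ om p m := by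
  have hd := sub_dvd_pow_sub_pow ((1 + X : PowerSeries ℤ_[p]) ^ p ^ n) 1 (p ^ (m - n))
  rw [one_pow, ← pow_mul, ← pow_add, Nat.add_sub_cancel' h] at hd
  exact hd

private lemma p_not_unit : ¬ IsUnit (p : ℤ_[p]) := by
  rw [PadicInt.isUnit_iff, PadicInt.norm_p]
  have hp1 : (1 : ℝ) < (p : ℝ) := by exact_mod_cast (Fact.out : p.Prime).one_lt
  have : ((p : ℝ))⁻¹ < 1 := by rw [inv_lt_one_iff₀]; right; exact hp1
  exact ne_of_lt this

private lemma om_mem_maxpow (n : ℕ) :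
    om p n ∈ (IsLocalRing.maximalIdeal (PowerSeries ℤ_[p])) ^ (n + 1) := by
  induction n with
  | zero =>
    have h0 : om p 0 = (X : PowerSeries ℤ_[p]) := by
      rw [om, pow_zero, pow_one, add_sub_cancel_left]
    rw [h0, pow_one, IsLocalRing.mem_maximalIdeal, mem_nonunits_iff,
      PowerSeries.isUnit_iff_constantCoeff, PowerSeries.constantCoeff_X]
    exact not_isUnit_zero
  | succ n ih =>
    have hfac : om p (n + 1)
        = (∑ i ∈ Finset.range p, ((1 + X : PowerSeries ℤ_[p]) ^ p ^ n) ^ i) * (om p n) := by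
      have hg := geom_sum_mul ((1 + X : PowerSeries ℤ_[p]) ^ p ^ n) p
      calc om p (n + 1) = ((1 + X : PowerSeries ℤ_[p]) ^ p ^ n) ^ p - 1 := by
            rw [om, ← pow_mul, ← pow_succ]
        _ = _ := by rw [← hg, om]
    rw [hfac]
    have hsum_mem : (∑ i ∈ Finset.range p, ((1 + X : PowerSeries ℤ_[p]) ^ p ^ n) ^ i)
        ∈ IsLocalRing.maximalIdeal (PowerSeries ℤ_[p]) := by
      rw [IsLocalRing.mem_maximalIdeal, mem_nonunits_iff, PowerSeries.isUnit_iff_constantCoeff]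
      have hcc : PowerSeries.constantCoeff
          (∑ i ∈ Finset.range p, ((1 + X : PowerSeries ℤ_[p]) ^ p ^ n) ^ i) = (p : ℤ_[p]) := by
        rw [map_sum]
        have : ∀ i ∈ Finset.range p, PowerSeries.constantCoeff
            (((1 + X : PowerSeries ℤ_[p]) ^ p ^ n) ^ i) = 1 := by
          intro i _
          rw [← pow_mul, map_pow, map_add, map_one, PowerSeries.constantCoeff_X, add_zero,
            one_pow]
        rw [Finset.sum_congr rfl this, Finset.sum_const, Finset.card_range, nsmul_eq_mul, mul_one]
      rw [hcc]
      exact p_not_unit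
    have hmul := Ideal.mul_mem_mul hsum_mem ih
    rwa [← pow_succ'] at hmul

private lemma factor_surjective {R : Type*} [CommRing R] {K K' : Ideal R} (h : K ≤ K') :
    Function.Surjective (Ideal.Quotient.factor h) := fun y => by
  obtain ⟨x, rfl⟩ := Ideal.Quotient.mk_surjective y
  exact ⟨Ideal.Quotient.mk K x, Ideal.Quotient.factor_mk h x⟩

private lemma card_quot_le_of_le {R : Type*} [CommRing R] {K K' : Ideal R} (h : K ≤ K')
    [Finite (R ⧸ K)] : Nat.card (R ⧸ K') ≤ Nat.card (R ⧸ K) :=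
  Nat.card_le_card_of_surjective _ (factor_surjective h)

private lemma le_of_card_quot_eq {R : Type*} [CommRing R] {K K' : Ideal R} (h : K ≤ K')
    [Finite (R ⧸ K)] (hcard : Nat.card (R ⧸ K) = Nat.card (R ⧸ K')) : K' ≤ K := by
  have hbij : Function.Bijective (Ideal.Quotient.factor h) :=
    (Nat.bijective_iff_surjective_and_card _).mpr ⟨factor_surjective h, hcard⟩
  intro x hx
  have h0 : (Ideal.Quotient.factor h) (Ideal.Quotient.mk K x)
      = (Ideal.Quotient.factor h) 0 := by
    rw [Ideal.Quotient.factor_mk, map_zero, Ideal.Quotient.eq_zero_iff_mem]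
    exact hx
  have := hbij.1 h0
  rwa [← Ideal.Quotient.eq_zero_iff_mem]

private lemma finite_quot_ker {R : Type*} [CommRing R] (I : Ideal R) (a : R)
    [Finite (R ⧸ I)] :
    Finite (R ⧸ LinearMap.ker (I.mkQ ∘ₗ LinearMap.toSpanSingleton R R a)) := by
  have e := LinearMap.quotKerEquivRange (I.mkQ ∘ₗ LinearMap.toSpanSingleton R R a)
  exact Finite.of_equiv _ e.symm.toEquiv

private lemma mem_ker_iff {R : Type*} [CommRing R] (I : Ideal R) (a x : R) :
    x ∈ LinearMap.ker (I.mkQ ∘ₗ LinearMap.toSpanSingleton R R a) ↔ x * a ∈ I := by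
  rw [LinearMap.mem_ker, LinearMap.comp_apply, LinearMap.toSpanSingleton_apply,
    smul_eq_mul, Submodule.mkQ_apply, Submodule.Quotient.mk_eq_zero]

private lemma card_quot_ker_le {R : Type*} [CommRing R] (I J : Ideal R) (hIJ : I ≤ J) (a : R)
    (ha : a ∈ J) [Finite (R ⧸ I)] [Finite (R ⧸ J)] {C : ℕ}
    (hC : Nat.card (R ⧸ I) ≤ C * Nat.card (R ⧸ J)) :
    Nat.card (R ⧸ LinearMap.ker (I.mkQ ∘ₗ LinearMap.toSpanSingleton R R a)) ≤ C := by
  set φ := I.mkQ ∘ₗ LinearMap.toSpanSingleton R R a with hφ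
  have hIJ' : I ≤ Submodule.comap (LinearMap.id : R →ₗ[R] R) J := by simpa using hIJ
  set π := Submodule.mapQ I J (LinearMap.id : R →ₗ[R] R) hIJ' with hπ
  set ψ := π.toAddMonoidHom with hψ
  have hπmk : ∀ x : R, π (Submodule.Quotient.mk x) = Submodule.Quotient.mk x := by
    intro x; rw [hπ, Submodule.mapQ_apply, LinearMap.id_apply]
  have hsurj : Function.Surjective ψ := by
    intro y
    obtain ⟨x, rfl⟩ := Submodule.mkQ_surjective J y
    exact ⟨Submodule.Quotient.mk x, hπmk x⟩
  have hlag : Nat.card (R ⧸ I) = Nat.card ((R ⧸ I) ⧸ ψ.ker) * Nat.card ψ.ker :=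
    AddSubgroup.card_eq_card_quotient_mul_card_addSubgroup ψ.ker
  have he1 : Nat.card ((R ⧸ I) ⧸ ψ.ker) = Nat.card (R ⧸ J) :=
    Nat.card_congr (QuotientAddGroup.quotientKerEquivOfSurjective ψ hsurj).toEquiv
  rw [he1] at hlag
  have hsub : (LinearMap.range φ : Set (R ⧸ I)) ⊆ (ψ.ker : Set (R ⧸ I)) := by
    rintro y ⟨x, rfl⟩
    have : ψ (φ x) = 0 := by
      show π (φ x) = 0
      rw [hφ, LinearMap.comp_apply, LinearMap.toSpanSingleton_apply, smul_eq_mul,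
        Submodule.mkQ_apply, Submodule.mapQ_apply, LinearMap.id_apply,
        Submodule.Quotient.mk_eq_zero]
      exact J.mul_mem_left x ha
    exact this
  have hcard1 : Nat.card (R ⧸ LinearMap.ker φ) = Nat.card (LinearMap.range φ) :=
    Nat.card_congr (LinearMap.quotKerEquivRange φ).toEquiv
  have hcard2 : Nat.card (LinearMap.range φ) ≤ Nat.card ψ.ker :=
    Nat.card_le_card_of_injective (Set.inclusion hsub) (Set.inclusion_injective hsub)
  have hpos : 0 < Nat.card (R ⧸ J) := Nat.card_pos
  have hker_le : Nat.card ψ.ker ≤ C := by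
    have hmul : Nat.card (R ⧸ J) * Nat.card ψ.ker ≤ Nat.card (R ⧸ J) * C := by
      calc Nat.card (R ⧸ J) * Nat.card ψ.ker = Nat.card (R ⧸ I) := hlag.symm
        _ ≤ C * Nat.card (R ⧸ J) := hC
        _ = Nat.card (R ⧸ J) * C := Nat.mul_comm _ _
    exact Nat.le_of_mul_le_mul_left hmul hpos
  calc Nat.card (R ⧸ LinearMap.ker φ) = Nat.card (LinearMap.range φ) := hcard1
    _ ≤ Nat.card ψ.ker := hcard2
    _ ≤ C := hker_le

private noncomputable def II (p : ℕ) [Fact p.Prime] (a₁ b : PowerSeries ℤ_[p]) (n : ℕ) :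
    Ideal (PowerSeries ℤ_[p]) := Ideal.span {a₁ * b, om p n}

private noncomputable def JJ (p : ℕ) [Fact p.Prime] (a₁ : PowerSeries ℤ_[p]) (n : ℕ) :
    Ideal (PowerSeries ℤ_[p]) := Ideal.span {a₁, om p n}

private noncomputable def KK (p : ℕ) [Fact p.Prime] (a₁ b : PowerSeries ℤ_[p]) (n : ℕ) :
    Ideal (PowerSeries ℤ_[p]) :=
  LinearMap.ker ((II p a₁ b n).mkQ ∘ₗ LinearMap.toSpanSingleton _ _ a₁)

private lemma II_def (a₁ b : PowerSeries ℤ_[p]) (n : ℕ) :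
    II p a₁ b n = Ideal.span {a₁ * b, om p n} := rfl

private lemma JJ_def (a₁ : PowerSeries ℤ_[p]) (n : ℕ) :
    JJ p a₁ n = Ideal.span {a₁, om p n} := rfl

private theorem key (a₁ b : PowerSeries ℤ_[p]) (ha₁ : a₁ ≠ 0) (C : ℕ)
    (hfinI : ∀ n, Finite (PowerSeries ℤ_[p] ⧸ II p a₁ b n))
    (hfinJ : ∀ n, Finite (PowerSeries ℤ_[p] ⧸ JJ p a₁ n))
    (hC : ∀ n, Nat.card (PowerSeries ℤ_[p] ⧸ II p a₁ b n)
      ≤ C * Nat.card (PowerSeries ℤ_[p] ⧸ JJ p a₁ n)) :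
    IsUnit b := by
  classical
  have hmemI : ∀ n, om p n ∈ II p a₁ b n := fun n => by
    rw [II_def]; exact Ideal.subset_span (by simp)
  have ha₁J : ∀ n, a₁ ∈ JJ p a₁ n := fun n => by
    rw [JJ_def]; exact Ideal.subset_span (by simp)
  have hIJ : ∀ n, II p a₁ b n ≤ JJ p a₁ n := by
    intro n
    rw [II_def]
    apply Ideal.span_le.mpr
    rintro x hx
    simp only [Set.mem_insert_iff, Set.mem_singleton_iff] at hx
    rcases hx with rfl | rfl
    · exact Ideal.mul_mem_right b _ (ha₁J n)
    · rw [JJ_def]; exact Ideal.subset_span (by simp)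
  have hImono : ∀ {n m : ℕ}, n ≤ m → II p a₁ b m ≤ II p a₁ b n := by
    intro n m h
    rw [II_def]
    apply Ideal.span_le.mpr
    rintro x hx
    simp only [Set.mem_insert_iff, Set.mem_singleton_iff] at hx
    rcases hx with rfl | rfl
    · rw [II_def]; exact Ideal.subset_span (by simp)
    · obtain ⟨d, hd⟩ := om_dvd (p := p) h
      rw [hd]
      exact Ideal.mul_mem_right d _ (hmemI n)
  have hKmem : ∀ n x, x ∈ KK p a₁ b n ↔ x * a₁ ∈ II p a₁ b n := fun n x =>
    mem_ker_iff (II p a₁ b n) a₁ x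
  have hKfin : ∀ n, Finite (PowerSeries ℤ_[p] ⧸ KK p a₁ b n) := by
    intro n
    haveI := hfinI n
    exact finite_quot_ker (II p a₁ b n) a₁
  have hKle : ∀ n, Nat.card (PowerSeries ℤ_[p] ⧸ KK p a₁ b n) ≤ C := by
    intro n
    haveI := hfinI n; haveI := hfinJ n
    exact card_quot_ker_le (II p a₁ b n) (JJ p a₁ n) (hIJ n) a₁ (ha₁J n) (hC n)
  have hKmono : ∀ {n m : ℕ}, n ≤ m → KK p a₁ b m ≤ KK p a₁ b n := by
    intro n m h x hx
    rw [hKmem] at hx ⊢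
    exact hImono h hx
  have hgmono : ∀ {n m : ℕ}, n ≤ m →
      Nat.card (PowerSeries ℤ_[p] ⧸ KK p a₁ b n)
        ≤ Nat.card (PowerSeries ℤ_[p] ⧸ KK p a₁ b m) := by
    intro n m h
    haveI := hKfin m
    exact card_quot_le_of_le (hKmono h)
  have hbdd : BddAbove (Set.range fun n => Nat.card (PowerSeries ℤ_[p] ⧸ KK p a₁ b n)) := by
    refine ⟨C, ?_⟩
    rintro _ ⟨n, rfl⟩
    exact hKle n
  obtain ⟨N, hN⟩ := Nat.sSup_mem (Set.range_nonempty
    (fun n => Nat.card (PowerSeries ℤ_[p] ⧸ KK p a₁ b n))) hbdd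
  have hstab : ∀ {n : ℕ}, N ≤ n → KK p a₁ b N ≤ KK p a₁ b n := by
    intro n hn
    haveI := hKfin n
    apply le_of_card_quot_eq (hKmono hn)
    apply le_antisymm
    · have h1 : Nat.card (PowerSeries ℤ_[p] ⧸ KK p a₁ b n)
          ≤ sSup (Set.range fun n => Nat.card (PowerSeries ℤ_[p] ⧸ KK p a₁ b n)) :=
        le_csSup hbdd ⟨n, rfl⟩
      exact le_trans h1 (le_of_eq hN.symm)
    · exact hgmono hn
  have homN : ∀ n, om p N * a₁ ∈ II p a₁ b n := by
    intro n
    rcases le_or_gt N n with hn | hn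
    · have h1 : om p N ∈ KK p a₁ b N := by
        rw [hKmem]
        exact Ideal.mul_mem_right a₁ _ (hmemI N)
      have h2 := hstab hn h1
      rwa [hKmem] at h2
    · obtain ⟨d, hd⟩ := om_dvd (p := p) (le_of_lt hn)
      rw [hd, mul_assoc]
      exact Ideal.mul_mem_right _ _ (hmemI n)
  have hsup : ∀ m : ℕ, om p N * a₁ ∈ Ideal.span {a₁ * b}
      ⊔ (IsLocalRing.maximalIdeal (PowerSeries ℤ_[p])) ^ m := by
    intro m
    have h1 : II p a₁ b m ≤ Ideal.span {a₁ * b}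
        ⊔ (IsLocalRing.maximalIdeal (PowerSeries ℤ_[p])) ^ m := by
      rw [II_def]
      apply Ideal.span_le.mpr
      rintro x hx
      simp only [Set.mem_insert_iff, Set.mem_singleton_iff] at hx
      rcases hx with rfl | rfl
      · exact Ideal.mem_sup_left (Ideal.mem_span_singleton_self _)
      · exact Ideal.mem_sup_right
          (Ideal.pow_le_pow_right (Nat.le_succ m) (om_mem_maxpow m))
    exact h1 (homN m)
  have hmem := mem_span_singleton_of_forall_mem_sup (a₁ * b) (om p N * a₁) hsup
  obtain ⟨c, hc⟩ := Ideal.mem_span_singleton'.mp hmem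
  have hb_dvd : b ∣ om p N := by
    refine ⟨c, ?_⟩
    apply mul_right_cancel₀ ha₁
    rw [← hc]; ring
  have hIb : II p a₁ b N ≤ Ideal.span {b} := by
    rw [II_def]
    apply Ideal.span_le.mpr
    rintro x hx
    simp only [Set.mem_insert_iff, Set.mem_singleton_iff] at hx
    rcases hx with rfl | rfl
    · exact Ideal.mem_span_singleton.mpr (dvd_mul_left b a₁)
    · exact Ideal.mem_span_singleton.mpr hb_dvd
  haveI := hfinI N
  have hfinb : Finite (PowerSeries ℤ_[p] ⧸ Ideal.span {b}) :=
    Finite.of_surjective _ (factor_surjective hIb)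
  exact isUnit_of_finite_quotient b hfinb

end Stmt8Aux

/-- If `a₁ ∣ a₂` in `Λ = ℤ_p[[X]]` and for every `n` the quotients
`Λ/(aᵢ, (1+X)^{p^n} - 1)` (which realize `Λ/aᵢΛ ⊗_Λ Λ_n`) are finite with ratio of
cardinalities bounded above and below independently of `n`, then `a₁Λ = a₂Λ`. -/
theorem stmt8 (p : ℕ) [Fact p.Prime] (a₁ a₂ : PowerSeries ℤ_[p])
    (hdvd : a₁ ∣ a₂)
    (hfin : ∀ n : ℕ,
      Finite (PowerSeries ℤ_[p] ⧸ Ideal.span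
        {a₁, (1 + PowerSeries.X : PowerSeries ℤ_[p]) ^ p ^ n - 1}) ∧
      Finite (PowerSeries ℤ_[p] ⧸ Ideal.span
        {a₂, (1 + PowerSeries.X : PowerSeries ℤ_[p]) ^ p ^ n - 1}))
    (hbound : ∃ C : ℕ, 0 < C ∧ ∀ n : ℕ,
      Nat.card (PowerSeries ℤ_[p] ⧸ Ideal.span
          {a₂, (1 + PowerSeries.X : PowerSeries ℤ_[p]) ^ p ^ n - 1}) ≤
        C * Nat.card (PowerSeries ℤ_[p] ⧸ Ideal.span
          {a₁, (1 + PowerSeries.X : PowerSeries ℤ_[p]) ^ p ^ n - 1}) ∧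
      Nat.card (PowerSeries ℤ_[p] ⧸ Ideal.span
          {a₁, (1 + PowerSeries.X : PowerSeries ℤ_[p]) ^ p ^ n - 1}) ≤
        C * Nat.card (PowerSeries ℤ_[p] ⧸ Ideal.span
          {a₂, (1 + PowerSeries.X : PowerSeries ℤ_[p]) ^ p ^ n - 1})) :
    Ideal.span {a₁} = Ideal.span {a₂} := by
  obtain ⟨b, rfl⟩ := hdvd
  by_cases ha₁ : a₁ = 0
  · rw [ha₁, zero_mul]
  obtain ⟨C, hCpos, hC⟩ := hbound
  have hu : IsUnit b := by
    refine Stmt8Aux.key a₁ b ha₁ C (fun n => (hfin n).2) (fun n => (hfin n).1)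
      (fun n => ?_)
    exact (hC n).1
  rw [Ideal.span_singleton_eq_span_singleton]
  exact ⟨hu.unit, by rw [IsUnit.unit_spec]⟩
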